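/- Let W_1,...,W_{n+u−1} be finite-dimensional subspaces of a vector space V, let ℓ ≤ n, and define W_{n+u} = Σ_{i≤ℓ} (W_i ∩ W_[i+1,n+u−1]). Then for every subspace S ≤ W_i with i ≤ ℓ: h(S | W_{n+u}) ≤ h(S | W_[i+1,n+u−1]), where h(A|B) = dim(A+B) − dim(B). In particular the linear choice of virtual node (8) in the paper satisfies condition (7). -/
import Mathlib


open Module Finset

/-- Conditional dimension: `h(A|B) = dim(A+B) - dim(B)`. -/
noncomputable def condDim {F V : Type*} [Field F] [AddCommGroup V] [Module F V]
    (A B : Submodule F V) : ℤ :=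
  (finrank F ↥(A ⊔ B) : ℤ) - (finrank F ↥B : ℤ)

/-- the linear virtual node `W_{n+u} = Σ_{i≤ℓ} (W_i ∩ W_[i+1,n+u-1])`
satisfies `h(S | W_{n+u}) ≤ h(S | W_[i+1,n+u-1])` for every subspace `S ≤ W_i`, `i ≤ ℓ`. -/
theorem stmt9 {F V : Type*} [Field F] [AddCommGroup V] [Module F V]
    (W : ℕ → Submodule F V) (hfd : ∀ i, FiniteDimensional F ↥(W i))
    (n ℓ u : ℕ) (hln : ℓ ≤ n) (hu : 1 ≤ u)
    (Wnu : Submodule F V)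
    (hWnu : Wnu = (Finset.Icc 1 ℓ).sup
      (fun i => W i ⊓ (Finset.Icc (i+1) (n+u-1)).sup W)) :
    ∀ i, 1 ≤ i → i ≤ ℓ → ∀ S : Submodule F V, S ≤ W i →
      condDim S Wnu ≤ condDim S ((Finset.Icc (i+1) (n+u-1)).sup W) := by
  intro i hi1 hil S hS
  set B : Submodule F V := (Finset.Icc (i+1) (n+u-1)).sup W with hB
  -- finite dimensionality
  haveI : FiniteDimensional F S := Submodule.finiteDimensional_of_le hS
  haveI : FiniteDimensional F B := Submodule.finiteDimensional_finset_sup _ _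
  haveI : FiniteDimensional F Wnu := by
    rw [hWnu]
    apply Submodule.finiteDimensional_finset_sup
  -- key containment : S ⊓ B ≤ Wnu
  have hkey : S ⊓ B ≤ Wnu := by
    rw [hWnu]
    calc S ⊓ B ≤ W i ⊓ B := inf_le_inf_right _ hS
    _ ≤ _ := Finset.le_sup (f := fun i => W i ⊓ (Finset.Icc (i+1) (n+u-1)).sup W)
        (Finset.mem_Icc.mpr ⟨hi1, hil⟩)
  have hmono : S ⊓ B ≤ S ⊓ Wnu := le_inf inf_le_left hkey
  have e1 := Submodule.finrank_sup_add_finrank_inf_eq S Wnu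
  have e2 := Submodule.finrank_sup_add_finrank_inf_eq S B
  have hr : finrank F ↥(S ⊓ B) ≤ finrank F ↥(S ⊓ Wnu) := Submodule.finrank_mono hmono
  unfold condDim
  omega
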